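/- Let 1 ≥ p_{d+1} ≥ p_{d+2} ≥ ... ≥ p_D ≥ 0, let ζ_{d+1}, ..., ζ_D ≥ 0 with ζ_i ≤ p_i, and set ζ = Σ_{i=d+1}^D ζ_i; assume ζ ≤ p_{d+1}. Then Σ_{k=d+1}^D Π_{i=d+1}^k (p_i − ζ_i) ≥ Σ_{k=d+1}^D (p_{d+1} − ζ)·Π_{i=d+2}^k p_i. -/
import Mathlib


open Finset

/-- Telescoping bound on the difference of products. -/
lemma aux_prod_sub_prod_le (p q : ℕ → ℝ) (n : ℕ)
    (h0 : ∀ i < n, 0 ≤ q i) (h1 : ∀ i < n, q i ≤ p i) (h2 : ∀ i < n, p i ≤ 1) :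
    ∏ i ∈ range n, p i - ∏ i ∈ range n, q i
      ≤ ∑ j ∈ range n, (p j - q j) * ∏ i ∈ Ico (j + 1) n, p i := by
  induction n with
  | zero => simp
  | succ n ih =>
    have h0' : ∀ i < n, 0 ≤ q i := fun i hi => h0 i (hi.trans n.lt_succ_self)
    have h1' : ∀ i < n, q i ≤ p i := fun i hi => h1 i (hi.trans n.lt_succ_self)
    have h2' : ∀ i < n, p i ≤ 1 := fun i hi => h2 i (hi.trans n.lt_succ_self)
    have hpn : 0 ≤ p n := (h0 n n.lt_succ_self).trans (h1 n n.lt_succ_self)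
    have hqprod : ∏ i ∈ range n, q i ≤ 1 := by
      apply Finset.prod_le_one
      · intro i hi; exact h0' i (mem_range.mp hi)
      · intro i hi
        exact (h1' i (mem_range.mp hi)).trans (h2' i (mem_range.mp hi))
    have hstep : p n * (∏ i ∈ range n, p i - ∏ i ∈ range n, q i)
        ≤ p n * ∑ j ∈ range n, (p j - q j) * ∏ i ∈ Ico (j + 1) n, p i :=
      mul_le_mul_of_nonneg_left (ih h0' h1' h2') hpn
    have hqn : (p n - q n) * ∏ i ∈ range n, q i ≤ (p n - q n) * 1 :=
      mul_le_mul_of_nonneg_left hqprod (by linarith [h1 n n.lt_succ_self])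
    rw [prod_range_succ, prod_range_succ, sum_range_succ]
    have hrw : p n * ∑ j ∈ range n, (p j - q j) * ∏ i ∈ Ico (j + 1) n, p i
        = ∑ j ∈ range n, (p j - q j) * ∏ i ∈ Ico (j + 1) (n + 1), p i := by
      rw [Finset.mul_sum]
      apply Finset.sum_congr rfl
      intro j hj
      have hj' : j + 1 ≤ n := mem_range.mp hj
      rw [prod_Ico_succ_top hj']
      ring
    have hIco : (∏ i ∈ Ico (n + 1) (n + 1), p i) = 1 := by simp
    rw [hIco]
    nlinarith [hstep, hqn, hrw]

/-- Range-indexed form of the redistribution inequality. -/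
lemma aux_main_range (n : ℕ) (P Z : ℕ → ℝ)
    (h0 : ∀ i < n, 0 ≤ P i - Z i) (hZ : ∀ i < n, 0 ≤ Z i) (hP1 : ∀ i < n, P i ≤ 1)
    (hmono : ∀ i j, i ≤ j → j < n → P j ≤ P i) :
    ∑ m ∈ range n, (P 0 - ∑ i ∈ range n, Z i) * ∏ i ∈ Ico 1 (m + 1), P i
      ≤ ∑ m ∈ range n, ∏ i ∈ range (m + 1), (P i - Z i) := by
  have hPnn : ∀ i < n, 0 ≤ P i := fun i hi => (h0 i hi).trans (by linarith [hZ i hi])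
  -- Step 1: per-m bound on the product difference
  have step1 : ∀ m < n, ∏ i ∈ range (m + 1), P i - ∏ i ∈ range (m + 1), (P i - Z i)
      ≤ ∑ j ∈ range (m + 1), Z j * ∏ i ∈ Ico (j + 1) (m + 1), P i := by
    intro m hm
    have := aux_prod_sub_prod_le P (fun i => P i - Z i) (m + 1)
      (fun i hi => h0 i (lt_of_lt_of_le hi hm))
      (fun i hi => by
        show P i - Z i ≤ P i
        linarith [hZ i (lt_of_lt_of_le hi hm)])
      (fun i hi => hP1 i (lt_of_lt_of_le hi hm))
    simpa using this
  -- Step 2: inner sum comparison, for each j < n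
  have step2 : ∀ j < n, ∑ m ∈ Ico j n, ∏ i ∈ Ico (j + 1) (m + 1), P i
      ≤ ∑ m ∈ range n, ∏ i ∈ Ico 1 (m + 1), P i := by
    intro j hj
    have hre : ∑ m ∈ Ico j n, ∏ i ∈ Ico (j + 1) (m + 1), P i
        = ∑ t ∈ range (n - j), ∏ i ∈ range t, P (j + 1 + i) := by
      rw [sum_Ico_eq_sum_range]
      apply Finset.sum_congr rfl
      intro t _
      rw [prod_Ico_eq_prod_range]
      have : j + t + 1 - (j + 1) = t := by omega
      rw [this]
    rw [hre]
    have hterm : ∀ t ∈ range (n - j), ∏ i ∈ range t, P (j + 1 + i)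
        ≤ ∏ i ∈ Ico 1 (t + 1), P i := by
      intro t ht
      have ht' : t < n - j := mem_range.mp ht
      have hre2 : ∏ i ∈ Ico 1 (t + 1), P i = ∏ i ∈ range t, P (1 + i) := by
        rw [prod_Ico_eq_prod_range]; simp
      rw [hre2]
      apply Finset.prod_le_prod
      · intro i hi
        have hi' : i < t := mem_range.mp hi
        exact hPnn _ (by omega)
      · intro i hi
        have hi' : i < t := mem_range.mp hi
        exact hmono (1 + i) (j + 1 + i) (by omega) (by omega)
    calc ∑ t ∈ range (n - j), ∏ i ∈ range t, P (j + 1 + i)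
        ≤ ∑ t ∈ range (n - j), ∏ i ∈ Ico 1 (t + 1), P i := Finset.sum_le_sum hterm
      _ ≤ ∑ t ∈ range n, ∏ i ∈ Ico 1 (t + 1), P i := by
          apply Finset.sum_le_sum_of_subset_of_nonneg
          · exact Finset.range_subset_range.mpr (by omega)
          · intro t ht _
            have ht' := mem_range.mp ht
            apply Finset.prod_nonneg
            intro i hi
            have := mem_Ico.mp hi
            exact hPnn i (by omega)
  -- Step 3: double sum bound
  have step3 : ∑ m ∈ range n, ∑ j ∈ range (m + 1), Z j * ∏ i ∈ Ico (j + 1) (m + 1), P i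
      ≤ (∑ j ∈ range n, Z j) * ∑ m ∈ range n, ∏ i ∈ Ico 1 (m + 1), P i := by
    have hswap : ∑ m ∈ range n, ∑ j ∈ range (m + 1), Z j * ∏ i ∈ Ico (j + 1) (m + 1), P i
        = ∑ j ∈ range n, ∑ m ∈ Ico j n, Z j * ∏ i ∈ Ico (j + 1) (m + 1), P i := by
      have := sum_Ico_Ico_comm 0 n (fun j m => Z j * ∏ i ∈ Ico (j + 1) (m + 1), P i)
      simp only [← Finset.range_eq_Ico] at this
      exact this.symm
    rw [hswap, Finset.sum_mul]
    apply Finset.sum_le_sum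
    intro j hj
    rw [← Finset.mul_sum]
    exact mul_le_mul_of_nonneg_left (step2 j (mem_range.mp hj)) (hZ j (mem_range.mp hj))
  -- Step 4: head factor split
  have step4 : ∀ m, ∏ i ∈ range (m + 1), P i = P 0 * ∏ i ∈ Ico 1 (m + 1), P i :=
    fun m => Finset.prod_range_eq_mul_Ico P (Nat.succ_pos m)
  have key : ∑ m ∈ range n, ∏ i ∈ range (m + 1), P i
      - ∑ m ∈ range n, ∏ i ∈ range (m + 1), (P i - Z i)
      ≤ (∑ j ∈ range n, Z j) * ∑ m ∈ range n, ∏ i ∈ Ico 1 (m + 1), P i := by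
    rw [← Finset.sum_sub_distrib]
    calc ∑ m ∈ range n, (∏ i ∈ range (m + 1), P i - ∏ i ∈ range (m + 1), (P i - Z i))
        ≤ ∑ m ∈ range n, ∑ j ∈ range (m + 1), Z j * ∏ i ∈ Ico (j + 1) (m + 1), P i :=
          Finset.sum_le_sum (fun m hm => step1 m (mem_range.mp hm))
      _ ≤ _ := step3
  have lhs_eq : ∑ m ∈ range n, (P 0 - ∑ i ∈ range n, Z i) * ∏ i ∈ Ico 1 (m + 1), P i
      = ∑ m ∈ range n, ∏ i ∈ range (m + 1), P i
        - (∑ i ∈ range n, Z i) * ∑ m ∈ range n, ∏ i ∈ Ico 1 (m + 1), P i := by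
    rw [Finset.mul_sum, ← Finset.sum_sub_distrib]
    apply Finset.sum_congr rfl
    intro m _
    rw [step4 m]
    ring
  linarith [key, lhs_eq]

/-- Distributing a fixed total decrease `ζ` over positions `d+1..D` yields an expected
accepted suffix length at least as large as concentrating the entire decrease at `d+1`:
`∑_{k=d+1}^D ∏_{i=d+1}^k (p_i − ζ_i) ≥ ∑_{k=d+1}^D (p_{d+1} − ζ)·∏_{i=d+2}^k p_i`. -/
theorem stmt8 (D d : ℕ) (hdD : d < D) (p ζ : ℕ → ℝ)
    (hp1 : p (d + 1) ≤ 1) (hpD : 0 ≤ p D)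
    (hmono : ∀ i, d + 1 ≤ i → i < D → p (i + 1) ≤ p i)
    (hζ0 : ∀ i ∈ Finset.Icc (d + 1) D, 0 ≤ ζ i)
    (hζp : ∀ i ∈ Finset.Icc (d + 1) D, ζ i ≤ p i)
    (hζsum : (∑ i ∈ Finset.Icc (d + 1) D, ζ i) ≤ p (d + 1)) :
    ∑ k ∈ Finset.Icc (d + 1) D,
        (p (d + 1) - ∑ i ∈ Finset.Icc (d + 1) D, ζ i) * ∏ i ∈ Finset.Icc (d + 2) k, p i
      ≤ ∑ k ∈ Finset.Icc (d + 1) D, ∏ i ∈ Finset.Icc (d + 1) k, (p i - ζ i) := by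
  set n := D - d with hn
  have hn1 : 1 ≤ n := by omega
  -- monotonicity chain
  have hchain : ∀ a b, d + 1 ≤ a → a ≤ b → b ≤ D → p b ≤ p a := by
    intro a b ha hab hbD
    induction b with
    | zero => omega
    | succ b ih =>
      rcases Nat.lt_or_ge a (b + 1) with h | h
      · have hb : a ≤ b := by omega
        have : p (b + 1) ≤ p b := hmono b (by omega) (by omega)
        exact this.trans (ih hb (by omega))
      · have : a = b + 1 := by omega
        rw [this]
  set P : ℕ → ℝ := fun i => p (d + 1 + i) with hP
  set Z : ℕ → ℝ := fun i => ζ (d + 1 + i) with hZ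
  have hmem : ∀ i < n, d + 1 + i ∈ Finset.Icc (d + 1) D := by
    intro i hi; rw [mem_Icc]; omega
  have h0 : ∀ i < n, 0 ≤ P i - Z i := by
    intro i hi; simp only [hP, hZ, sub_nonneg]; exact hζp _ (hmem i hi)
  have hZnn : ∀ i < n, 0 ≤ Z i := fun i hi => hζ0 _ (hmem i hi)
  have hP1 : ∀ i < n, P i ≤ 1 := by
    intro i hi
    exact (hchain (d + 1) (d + 1 + i) le_rfl (by omega) (by omega)).trans hp1
  have hPm : ∀ i j, i ≤ j → j < n → P j ≤ P i := by
    intro i j hij hj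
    exact hchain (d + 1 + i) (d + 1 + j) (by omega) (by omega) (by omega)
  have main := aux_main_range n P Z h0 hZnn hP1 hPm
  -- convert sums/products over Icc to range form
  have hsumζ : ∑ i ∈ Finset.Icc (d + 1) D, ζ i = ∑ i ∈ range n, Z i := by
    rw [← Finset.Ico_add_one_right_eq_Icc, sum_Ico_eq_sum_range]
    apply Finset.sum_congr (by congr 1; omega)
    intro i _; rfl
  have hL : ∑ k ∈ Finset.Icc (d + 1) D,
        (p (d + 1) - ∑ i ∈ Finset.Icc (d + 1) D, ζ i) * ∏ i ∈ Finset.Icc (d + 2) k, p i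
      = ∑ m ∈ range n, (P 0 - ∑ i ∈ range n, Z i) * ∏ i ∈ Ico 1 (m + 1), P i := by
    rw [hsumζ, ← Finset.Ico_add_one_right_eq_Icc, sum_Ico_eq_sum_range]
    apply Finset.sum_congr (by congr 1; omega)
    intro m hm
    congr 1
    rw [← Finset.Ico_add_one_right_eq_Icc, prod_Ico_eq_prod_range, prod_Ico_eq_prod_range]
    have e1 : d + 1 + m + 1 - (d + 2) = m := by omega
    have e2 : m + 1 - 1 = m := by omega
    rw [e1, e2]
    apply Finset.prod_congr rfl
    intro i _
    show p (d + 2 + i) = P (1 + i)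
    simp only [hP]
    congr 1
    omega
  have hR : ∑ k ∈ Finset.Icc (d + 1) D, ∏ i ∈ Finset.Icc (d + 1) k, (p i - ζ i)
      = ∑ m ∈ range n, ∏ i ∈ range (m + 1), (P i - Z i) := by
    rw [← Finset.Ico_add_one_right_eq_Icc, sum_Ico_eq_sum_range]
    apply Finset.sum_congr (by congr 1; omega)
    intro m hm
    rw [← Finset.Ico_add_one_right_eq_Icc, prod_Ico_eq_prod_range]
    have e1 : d + 1 + m + 1 - (d + 1) = m + 1 := by omega
    rw [e1]
  rw [hL, hR]
  exact main
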